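/- Let 0 < α < α', let x ∈ ℝ, let 𝒢 be holomorphic on the open disk {ϑ∈ℂ : |ϑ−x| < α'}, and suppose |𝒢(ϑ)| ≤ M on the closed disk {|ϑ−x| ≤ α}. Let ζ₀ satisfy |ζ₀−x| < α/2. Define ℱ(ϑ) := (𝒢(ϑ) − 𝒢(ζ₀) − 𝒢'(ζ₀)(ϑ−ζ₀)) / (ϑ−ζ₀)², i.e. ℱ is the holomorphic function on the disk with 𝒢(ϑ) = 𝒢(ζ₀) + 𝒢'(ζ₀)(ϑ−ζ₀) + ℱ(ϑ)(ϑ−ζ₀)². Then for every ϑ in the open disk {|ϑ−x| < α/2} one has |ℱ(ϑ)| ≤ 8M/α² and |ℱ'(ϑ)| ≤ 16M/α³. -/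

import Mathlib

open Set Metric

namespace S12aux

variable {c a b : ℂ} {R : ℝ}

lemma circle_integral_add {f g : ℂ → ℂ} {c : ℂ} {R : ℝ} (hf : CircleIntegrable f c R)
    (hg : CircleIntegrable g c R) :
    (∮ z in C(c, R), (f z + g z)) = (∮ z in C(c, R), f z) + ∮ z in C(c, R), g z := by
  simp only [circleIntegral, smul_add, intervalIntegral.integral_add hf.out hg.out]

lemma ne_of_mem (ha : a ∈ ball c R) {z : ℂ} (hz : z ∈ sphere c R) : z - a ≠ 0 := by
  refine sub_ne_zero.2 fun h => ?_
  rw [← h] at ha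
  exact absurd (mem_ball.mp ha) (by simp [mem_sphere.mp hz])

lemma contbase (ha : a ∈ ball c R) (hb : b ∈ ball c R) (m n : ℕ) :
    ContinuousOn (fun z => ((z - a)⁻¹) ^ m * ((z - b)⁻¹) ^ n) (sphere c R) :=
  ContinuousOn.mul
    ((((continuous_id.sub continuous_const).continuousOn).inv₀
      fun z hz => ne_of_mem ha hz).pow m)
    ((((continuous_id.sub continuous_const).continuousOn).inv₀
      fun z hz => ne_of_mem hb hz).pow n)

lemma intg (hR : 0 ≤ R) (ha : a ∈ ball c R) (hb : b ∈ ball c R) (m n : ℕ) :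
    CircleIntegrable (fun z => ((z - a)⁻¹) ^ m * ((z - b)⁻¹) ^ n) c R :=
  (contbase ha hb m n).circleIntegrable hR

lemma Ik (a : ℂ) (c : ℂ) (R : ℝ) {k : ℕ} (hk : 2 ≤ k) :
    (∮ z in C(c, R), ((z - a)⁻¹) ^ k) = 0 := by
  have h : ∀ z : ℂ, ((z - a)⁻¹) ^ k = (z - a) ^ (-(k : ℤ)) := fun z => by
    rw [inv_pow, ← zpow_natCast, ← zpow_neg]
  simp only [h]
  exact circleIntegral.integral_sub_zpow_of_ne (by omega) _ _ _

lemma Jrec (hR : 0 < R) (ha : a ∈ ball c R) (hb : b ∈ ball c R) (hab : a ≠ b) (m n : ℕ) :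
    (∮ z in C(c, R), ((z - a)⁻¹) ^ (m + 1) * ((z - b)⁻¹) ^ (n + 1)) =
      (a - b)⁻¹ * ((∮ z in C(c, R), ((z - a)⁻¹) ^ (m + 1) * ((z - b)⁻¹) ^ n) -
        ∮ z in C(c, R), ((z - a)⁻¹) ^ m * ((z - b)⁻¹) ^ (n + 1)) := by
  rw [← circleIntegral.integral_sub (intg hR.le ha hb _ _) (intg hR.le ha hb _ _),
    ← circleIntegral.integral_const_mul]
  refine circleIntegral.integral_congr hR.le fun z hz => ?_
  have hza := ne_of_mem ha hz
  have hzb := ne_of_mem hb hz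
  have hab' : a - b ≠ 0 := sub_ne_zero.2 hab
  have hxy : (z - a)⁻¹ - (z - b)⁻¹ = (a - b) * ((z - a)⁻¹ * (z - b)⁻¹) := by
    field_simp
    ring
  rw [eq_inv_mul_iff_mul_eq₀ hab']
  linear_combination (-(((z - a)⁻¹) ^ m * ((z - b)⁻¹) ^ n)) * hxy

lemma Jzero (hR : 0 < R) (ha : a ∈ ball c R) (hb : b ∈ ball c R)
    {m n : ℕ} (hm1 : 1 ≤ m) (hm2 : m ≤ 2) (hn1 : 1 ≤ n) (hn2 : n ≤ 2) :
    (∮ z in C(c, R), ((z - a)⁻¹) ^ m * ((z - b)⁻¹) ^ n) = 0 := by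
  rcases eq_or_ne a b with rfl | hab
  · simp only [← pow_add]
    exact Ik a c R (by omega)
  · have J10 : (∮ z in C(c, R), ((z - a)⁻¹) ^ 1 * ((z - b)⁻¹) ^ 0) = 2 * Real.pi * Complex.I := by
      simp only [pow_one, pow_zero, mul_one]
      exact circleIntegral.integral_sub_inv_of_mem_ball ha
    have J01 : (∮ z in C(c, R), ((z - a)⁻¹) ^ 0 * ((z - b)⁻¹) ^ 1) = 2 * Real.pi * Complex.I := by
      simp only [pow_one, pow_zero, one_mul]
      exact circleIntegral.integral_sub_inv_of_mem_ball hb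
    have J20 : (∮ z in C(c, R), ((z - a)⁻¹) ^ 2 * ((z - b)⁻¹) ^ 0) = 0 := by
      simp only [pow_zero, mul_one]
      exact Ik a c R le_rfl
    have J02 : (∮ z in C(c, R), ((z - a)⁻¹) ^ 0 * ((z - b)⁻¹) ^ 2) = 0 := by
      simp only [pow_zero, one_mul]
      exact Ik b c R le_rfl
    have J11 : (∮ z in C(c, R), ((z - a)⁻¹) ^ 1 * ((z - b)⁻¹) ^ 1) = 0 := by
      rw [Jrec hR ha hb hab 0 0, J10, J01]; ring
    have J21 : (∮ z in C(c, R), ((z - a)⁻¹) ^ 2 * ((z - b)⁻¹) ^ 1) = 0 := by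
      rw [Jrec hR ha hb hab 1 0, J20, J11]; ring
    have J12 : (∮ z in C(c, R), ((z - a)⁻¹) ^ 1 * ((z - b)⁻¹) ^ 2) = 0 := by
      rw [Jrec hR ha hb hab 0 1, J11, J02]; ring
    have J22 : (∮ z in C(c, R), ((z - a)⁻¹) ^ 2 * ((z - b)⁻¹) ^ 2) = 0 := by
      rw [Jrec hR ha hb hab 1 1, J21, J12]; ring
    interval_cases m <;> interval_cases n <;> assumption

end S12aux

/-- Lemma V.4(v), quantitative Cauchy estimate: if `𝒢` is holomorphic
on the disk `{|ϑ−x| < α'}`, bounded by `M` on `{|ϑ−x| ≤ α}` with `0 < α < α'`, and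
`|ζ₀−x| < α/2`, then the second-order Taylor remainder factor `ℱ`, i.e. the holomorphic
function with `𝒢(ϑ) = 𝒢(ζ₀) + 𝒢'(ζ₀)(ϑ−ζ₀) + ℱ(ϑ)(ϑ−ζ₀)²`, satisfies
`|ℱ(ϑ)| ≤ 8M/α²` and `|ℱ'(ϑ)| ≤ 16M/α³` on `{|ϑ−x| < α/2}`. -/
theorem statement_12
    (α α' x M : ℝ) (hα : 0 < α) (hαα' : α < α')
    (G : ℂ → ℂ) (ζ₀ : ℂ)
    (hG_holo : DifferentiableOn ℂ G (ball (x : ℂ) α'))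
    (hG_bdd : ∀ ϑ ∈ closedBall (x : ℂ) α, ‖G ϑ‖ ≤ M)
    (hζ₀ : ‖ζ₀ - (x : ℂ)‖ < α / 2)
    (F : ℂ → ℂ)
    (hF_holo : DifferentiableOn ℂ F (ball (x : ℂ) α'))
    (hF_taylor : ∀ ϑ ∈ ball (x : ℂ) α',
      G ϑ = G ζ₀ + deriv G ζ₀ * (ϑ - ζ₀) + F ϑ * (ϑ - ζ₀) ^ 2) :
    ∀ ϑ ∈ ball (x : ℂ) (α / 2),
      ‖F ϑ‖ ≤ 8 * M / α ^ 2 ∧ ‖deriv F ϑ‖ ≤ 16 * M / α ^ 3 := by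
  have hα2 : 0 < α / 2 := by linarith
  have hζα : ζ₀ ∈ ball (x : ℂ) α := by
    rw [mem_ball, dist_eq_norm]; linarith
  have hsub1 : closedBall (x : ℂ) α ⊆ ball (x : ℂ) α' := closedBall_subset_ball hαα'
  have hsphere : sphere (x : ℂ) α ⊆ ball (x : ℂ) α' := sphere_subset_closedBall.trans hsub1
  have hM : 0 ≤ M := le_trans (norm_nonneg _) (hG_bdd _ (mem_closedBall_self hα.le))
  have hGc : ContinuousOn G (sphere (x : ℂ) α) := hG_holo.continuousOn.mono hsphere
  have h2pi : ‖(2 * Real.pi * Complex.I : ℂ)‖ = 2 * Real.pi := by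
    simp [norm_mul, Complex.norm_I, Complex.norm_real, abs_of_nonneg Real.pi_pos.le]
  have hpi : (0:ℝ) < 2 * Real.pi := by positivity
  intro ϑ hϑ
  have hϑα : ϑ ∈ ball (x : ℂ) α := ball_subset_ball (by linarith) hϑ
  have hϑα' : ϑ ∈ ball (x : ℂ) α' := ball_subset_ball (by linarith) hϑ
  have hϑn : ‖ϑ - (x : ℂ)‖ < α / 2 := by
    rw [mem_ball, dist_eq_norm] at hϑ; exact hϑ
  -- formula for F on the sphere
  have hFz : ∀ z ∈ sphere (x : ℂ) α,
      F z = (G z - G ζ₀ - deriv G ζ₀ * (z - ζ₀)) * ((z - ζ₀)⁻¹) ^ 2 := by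
    intro z hz
    have hza : z - ζ₀ ≠ 0 := S12aux.ne_of_mem hζα hz
    have ht := hF_taylor z (hsphere hz)
    field_simp
    linear_combination -ht
  -- norm bounds on the sphere
  have hinva : ∀ z ∈ sphere (x : ℂ) α, ‖(z - ζ₀)⁻¹‖ ≤ 2 / α := by
    intro z hz
    have h1 : ‖z - (x : ℂ)‖ = α := by
      rw [mem_sphere_iff_norm] at hz; exact hz
    have h2 : α / 2 ≤ ‖z - ζ₀‖ := by
      have h3 : ‖z - (x : ℂ)‖ - ‖ζ₀ - (x : ℂ)‖ ≤ ‖(z - (x : ℂ)) - (ζ₀ - (x : ℂ))‖ :=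
        norm_sub_norm_le _ _
      rw [sub_sub_sub_cancel_right] at h3
      linarith
    rw [norm_inv]
    calc ‖z - ζ₀‖⁻¹ ≤ (α / 2)⁻¹ := by
          exact inv_anti₀ hα2 h2
      _ = 2 / α := by rw [inv_div]
  have hinvb : ∀ z ∈ sphere (x : ℂ) α, ‖(z - ϑ)⁻¹‖ ≤ 2 / α := by
    intro z hz
    have h1 : ‖z - (x : ℂ)‖ = α := by
      rw [mem_sphere_iff_norm] at hz; exact hz
    have h2 : α / 2 ≤ ‖z - ϑ‖ := by
      have h3 : ‖z - (x : ℂ)‖ - ‖ϑ - (x : ℂ)‖ ≤ ‖(z - (x : ℂ)) - (ϑ - (x : ℂ))‖ :=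
        norm_sub_norm_le _ _
      rw [sub_sub_sub_cancel_right] at h3
      linarith
    rw [norm_inv]
    calc ‖z - ϑ‖⁻¹ ≤ (α / 2)⁻¹ := by
          exact inv_anti₀ hα2 h2
      _ = 2 / α := by rw [inv_div]
  have h2α : (0:ℝ) ≤ 2 / α := by positivity
  constructor
  · -- value bound
    have hFdc : DiffContOnCl ℂ F (ball (x : ℂ) α) :=
      DifferentiableOn.diffContOnCl
        (hF_holo.mono (closure_ball_subset_closedBall.trans hsub1))
    have cauchy1 : (∮ z in C((x : ℂ), α), (z - ϑ)⁻¹ • F z)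
        = (2 * Real.pi * Complex.I : ℂ) • F ϑ := hFdc.circleIntegral_sub_inv_smul hϑα
    have intG2 : CircleIntegrable
        (fun z => G z * (((z - ζ₀)⁻¹) ^ 2 * ((z - ϑ)⁻¹) ^ 1)) (x : ℂ) α :=
      (hGc.mul (S12aux.contbase hζα hϑα 2 1)).circleIntegrable hα.le
    have int21 : CircleIntegrable
        (fun z => G ζ₀ * (((z - ζ₀)⁻¹) ^ 2 * ((z - ϑ)⁻¹) ^ 1)) (x : ℂ) α :=
      (continuousOn_const.mul (S12aux.contbase hζα hϑα 2 1)).circleIntegrable hα.le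
    have int11 : CircleIntegrable
        (fun z => deriv G ζ₀ * (((z - ζ₀)⁻¹) ^ 1 * ((z - ϑ)⁻¹) ^ 1)) (x : ℂ) α :=
      (continuousOn_const.mul (S12aux.contbase hζα hϑα 1 1)).circleIntegrable hα.le
    have intS1 : CircleIntegrable
        (fun z => G ζ₀ * (((z - ζ₀)⁻¹) ^ 2 * ((z - ϑ)⁻¹) ^ 1)
          + deriv G ζ₀ * (((z - ζ₀)⁻¹) ^ 1 * ((z - ϑ)⁻¹) ^ 1)) (x : ℂ) α :=
      (((continuousOn_const.mul (S12aux.contbase hζα hϑα 2 1))).add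
        ((continuousOn_const.mul (S12aux.contbase hζα hϑα 1 1)))).circleIntegrable hα.le
    have e1 : (∮ z in C((x : ℂ), α), (z - ϑ)⁻¹ • F z)
        = ∮ z in C((x : ℂ), α),
            (G z * (((z - ζ₀)⁻¹) ^ 2 * ((z - ϑ)⁻¹) ^ 1)
              - (G ζ₀ * (((z - ζ₀)⁻¹) ^ 2 * ((z - ϑ)⁻¹) ^ 1)
                + deriv G ζ₀ * (((z - ζ₀)⁻¹) ^ 1 * ((z - ϑ)⁻¹) ^ 1))) := by
      refine circleIntegral.integral_congr hα.le fun z hz => ?_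
      have hza : z - ζ₀ ≠ 0 := S12aux.ne_of_mem hζα hz
      have hzb : z - ϑ ≠ 0 := S12aux.ne_of_mem hϑα hz
      rw [smul_eq_mul, hFz z hz]
      have h1 : (z - ζ₀) * (z - ζ₀)⁻¹ = 1 := mul_inv_cancel₀ hza
      linear_combination (-(deriv G ζ₀ * (z - ζ₀)⁻¹ * (z - ϑ)⁻¹)) * h1
    have e2 : (∮ z in C((x : ℂ), α), (z - ϑ)⁻¹ • F z)
        = ∮ z in C((x : ℂ), α), G z * (((z - ζ₀)⁻¹) ^ 2 * ((z - ϑ)⁻¹) ^ 1) := by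
      rw [e1, circleIntegral.integral_sub intG2 intS1,
        S12aux.circle_integral_add int21 int11,
        circleIntegral.integral_const_mul, circleIntegral.integral_const_mul,
        S12aux.Jzero hα hζα hϑα (by norm_num) (by norm_num) (by norm_num) (by norm_num),
        S12aux.Jzero hα hζα hϑα (by norm_num) (by norm_num) (by norm_num) (by norm_num)]
      ring
    have hbound : ‖∮ z in C((x : ℂ), α), G z * (((z - ζ₀)⁻¹) ^ 2 * ((z - ϑ)⁻¹) ^ 1)‖
        ≤ 2 * Real.pi * α * (M * ((2 / α) ^ 2 * (2 / α) ^ 1)) := by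
      refine circleIntegral.norm_integral_le_of_norm_le_const hα.le fun z hz => ?_
      have h1 : ‖G z‖ ≤ M := hG_bdd z (sphere_subset_closedBall hz)
      have h2 := hinva z hz
      have h3 := hinvb z hz
      calc ‖G z * (((z - ζ₀)⁻¹) ^ 2 * ((z - ϑ)⁻¹) ^ 1)‖
          = ‖G z‖ * (‖(z - ζ₀)⁻¹‖ ^ 2 * ‖(z - ϑ)⁻¹‖ ^ 1) := by
            simp [norm_mul, norm_pow]
        _ ≤ M * ((2 / α) ^ 2 * (2 / α) ^ 1) := by gcongr
    rw [← e2, cauchy1, norm_smul, h2pi] at hbound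
    have hid : 2 * Real.pi * α * (M * ((2 / α) ^ 2 * (2 / α) ^ 1))
        = 2 * Real.pi * (8 * M / α ^ 2) := by
      field_simp; ring
    rw [hid] at hbound
    exact le_of_mul_le_mul_left hbound hpi
  · -- derivative bound
    have hDdiff : DifferentiableOn ℂ (dslope F ϑ) (ball (x : ℂ) α') :=
      (Complex.differentiableOn_dslope (isOpen_ball.mem_nhds hϑα')).mpr hF_holo
    have hDdc : DiffContOnCl ℂ (dslope F ϑ) (ball (x : ℂ) α) :=
      DifferentiableOn.diffContOnCl
        (hDdiff.mono (closure_ball_subset_closedBall.trans hsub1))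
    have cauchy2 : (∮ z in C((x : ℂ), α), (z - ϑ)⁻¹ • dslope F ϑ z)
        = (2 * Real.pi * Complex.I : ℂ) • deriv F ϑ := by
      rw [hDdc.circleIntegral_sub_inv_smul hϑα, dslope_same]
    have intG2 : CircleIntegrable
        (fun z => G z * (((z - ζ₀)⁻¹) ^ 2 * ((z - ϑ)⁻¹) ^ 2)) (x : ℂ) α :=
      (hGc.mul (S12aux.contbase hζα hϑα 2 2)).circleIntegrable hα.le
    have int22 : CircleIntegrable
        (fun z => G ζ₀ * (((z - ζ₀)⁻¹) ^ 2 * ((z - ϑ)⁻¹) ^ 2)) (x : ℂ) α :=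
      (continuousOn_const.mul (S12aux.contbase hζα hϑα 2 2)).circleIntegrable hα.le
    have int12 : CircleIntegrable
        (fun z => deriv G ζ₀ * (((z - ζ₀)⁻¹) ^ 1 * ((z - ϑ)⁻¹) ^ 2)) (x : ℂ) α :=
      (continuousOn_const.mul (S12aux.contbase hζα hϑα 1 2)).circleIntegrable hα.le
    have int02 : CircleIntegrable
        (fun z => F ϑ * (((z - ζ₀)⁻¹) ^ 0 * ((z - ϑ)⁻¹) ^ 2)) (x : ℂ) α :=
      (continuousOn_const.mul (S12aux.contbase hζα hϑα 0 2)).circleIntegrable hα.le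
    have intS2a : CircleIntegrable
        (fun z => G ζ₀ * (((z - ζ₀)⁻¹) ^ 2 * ((z - ϑ)⁻¹) ^ 2)
          + deriv G ζ₀ * (((z - ζ₀)⁻¹) ^ 1 * ((z - ϑ)⁻¹) ^ 2)) (x : ℂ) α :=
      (((continuousOn_const.mul (S12aux.contbase hζα hϑα 2 2))).add
        ((continuousOn_const.mul (S12aux.contbase hζα hϑα 1 2)))).circleIntegrable hα.le
    have intS2 : CircleIntegrable
        (fun z => G ζ₀ * (((z - ζ₀)⁻¹) ^ 2 * ((z - ϑ)⁻¹) ^ 2)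
          + deriv G ζ₀ * (((z - ζ₀)⁻¹) ^ 1 * ((z - ϑ)⁻¹) ^ 2)
          + F ϑ * (((z - ζ₀)⁻¹) ^ 0 * ((z - ϑ)⁻¹) ^ 2)) (x : ℂ) α :=
      ((((continuousOn_const.mul (S12aux.contbase hζα hϑα 2 2))).add
        ((continuousOn_const.mul (S12aux.contbase hζα hϑα 1 2)))).add
        ((continuousOn_const.mul (S12aux.contbase hζα hϑα 0 2)))).circleIntegrable hα.le
    have e1 : (∮ z in C((x : ℂ), α), (z - ϑ)⁻¹ • dslope F ϑ z)
        = ∮ z in C((x : ℂ), α),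
            (G z * (((z - ζ₀)⁻¹) ^ 2 * ((z - ϑ)⁻¹) ^ 2)
              - ((G ζ₀ * (((z - ζ₀)⁻¹) ^ 2 * ((z - ϑ)⁻¹) ^ 2)
                + deriv G ζ₀ * (((z - ζ₀)⁻¹) ^ 1 * ((z - ϑ)⁻¹) ^ 2))
                + F ϑ * (((z - ζ₀)⁻¹) ^ 0 * ((z - ϑ)⁻¹) ^ 2))) := by
      refine circleIntegral.integral_congr hα.le fun z hz => ?_
      have hza : z - ζ₀ ≠ 0 := S12aux.ne_of_mem hζα hz
      have hzb : z - ϑ ≠ 0 := S12aux.ne_of_mem hϑα hz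
      have hzϑ : z ≠ ϑ := fun h => hzb (by rw [h, sub_self])
      rw [smul_eq_mul, dslope_of_ne F hzϑ, slope_def_field, hFz z hz]
      have h1 : (z - ζ₀) * (z - ζ₀)⁻¹ = 1 := mul_inv_cancel₀ hza
      have h2 : (z - ϑ) * (z - ϑ)⁻¹ = 1 := mul_inv_cancel₀ hzb
      rw [div_eq_mul_inv]
      linear_combination (-(deriv G ζ₀ * (z - ζ₀)⁻¹ * ((z - ϑ)⁻¹) ^ 2)) * h1
    have X02 : (∮ z in C((x : ℂ), α), ((z - ζ₀)⁻¹) ^ 0 * ((z - ϑ)⁻¹) ^ 2) = 0 := by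
      simp only [pow_zero, one_mul]
      exact S12aux.Ik ϑ _ _ le_rfl
    have e2 : (∮ z in C((x : ℂ), α), (z - ϑ)⁻¹ • dslope F ϑ z)
        = ∮ z in C((x : ℂ), α), G z * (((z - ζ₀)⁻¹) ^ 2 * ((z - ϑ)⁻¹) ^ 2) := by
      rw [e1, circleIntegral.integral_sub intG2 intS2,
        S12aux.circle_integral_add intS2a int02,
        S12aux.circle_integral_add int22 int12,
        circleIntegral.integral_const_mul, circleIntegral.integral_const_mul,
        circleIntegral.integral_const_mul, X02,
        S12aux.Jzero hα hζα hϑα (by norm_num) (by norm_num) (by norm_num) (by norm_num),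
        S12aux.Jzero hα hζα hϑα (by norm_num) (by norm_num) (by norm_num) (by norm_num)]
      ring
    have hbound : ‖∮ z in C((x : ℂ), α), G z * (((z - ζ₀)⁻¹) ^ 2 * ((z - ϑ)⁻¹) ^ 2)‖
        ≤ 2 * Real.pi * α * (M * ((2 / α) ^ 2 * (2 / α) ^ 2)) := by
      refine circleIntegral.norm_integral_le_of_norm_le_const hα.le fun z hz => ?_
      have h1 : ‖G z‖ ≤ M := hG_bdd z (sphere_subset_closedBall hz)
      have h2 := hinva z hz
      have h3 := hinvb z hz
      calc ‖G z * (((z - ζ₀)⁻¹) ^ 2 * ((z - ϑ)⁻¹) ^ 2)‖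
          = ‖G z‖ * (‖(z - ζ₀)⁻¹‖ ^ 2 * ‖(z - ϑ)⁻¹‖ ^ 2) := by
            simp [norm_mul, norm_pow]
        _ ≤ M * ((2 / α) ^ 2 * (2 / α) ^ 2) := by gcongr
    rw [← e2, cauchy2, norm_smul, h2pi] at hbound
    have hid : 2 * Real.pi * α * (M * ((2 / α) ^ 2 * (2 / α) ^ 2))
        = 2 * Real.pi * (16 * M / α ^ 3) := by
      field_simp; ring
    rw [hid] at hbound
    exact le_of_mul_le_mul_left hbound hpi
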